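/- Let n ≥ 5 be odd, c := cos(π/n)/(1 + cos(π/n)), α := (n−1)π/n, and define the real symmetric (1+n)×(1+n) matrix Z (indexed by 0,1,…,n) by Z_{00} = 1/c, Z_{0j} = Z_{j0} = −1 for j ∈ {1,…,n}, and Z_{jk} = c + (1−c)·cos((j−k)α) for j, k ∈ {1,…,n}. Then the only real symmetric (1+n)×(1+n) matrix M satisfying M_{00} = 0, M_{0i} = M_{ii} for all i ∈ {1,…,n}, M_{ij} = 0 for all distinct i, j ∈ {1,…,n} with i − j ≢ ±1 (mod n), and M·Z = 0, is M = 0. -/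

import Mathlib

/-- The explicit dual optimal solution `Z` of the Lovász theta SDP of the complement `C̄_n` of
the `n`-cycle (rows/columns indexed `0, 1, …, n`): with `c = cos(π/n)/(1 + cos(π/n))` and
`α = (n-1)π/n`, it has `Z 0 0 = 1/c`, `Z 0 j = Z j 0 = -1` for `j ∈ {1, …, n}` and
`Z j k = c + (1 - c)·cos((j - k)α)` for `j, k ∈ {1, …, n}`. -/
noncomputable def antiHoleDualZ (n : ℕ) : Matrix (Fin (n + 1)) (Fin (n + 1)) ℝ :=
  fun i j =>
    if i.val = 0 ∧ j.val = 0 then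
      (1 + Real.cos (Real.pi / n)) / Real.cos (Real.pi / n)
    else if i.val = 0 ∨ j.val = 0 then -1
    else
      Real.cos (Real.pi / n) / (1 + Real.cos (Real.pi / n)) +
        (1 - Real.cos (Real.pi / n) / (1 + Real.cos (Real.pi / n))) *
          Real.cos (((i.val : ℝ) - (j.val : ℝ)) * (((n : ℝ) - 1) * Real.pi / n))

/-- The angle `α = (n-1)π/n`. -/
private noncomputable def ahA (n : ℕ) : ℝ := ((n : ℝ) - 1) * Real.pi / n

/-- The constant `c = cos(π/n)/(1+cos(π/n))`. -/
private noncomputable def ahc (n : ℕ) : ℝ :=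
  Real.cos (Real.pi / n) / (1 + Real.cos (Real.pi / n))

private lemma ahZ00 (n : ℕ) :
    antiHoleDualZ n 0 0 = (1 + Real.cos (Real.pi / n)) / Real.cos (Real.pi / n) := by
  simp [antiHoleDualZ]

private lemma ahZs0 (n : ℕ) (q : Fin n) : antiHoleDualZ n q.succ 0 = -1 := by
  simp [antiHoleDualZ, Fin.val_succ]

private lemma ahZ0s (n : ℕ) (k : Fin n) : antiHoleDualZ n 0 k.succ = -1 := by
  simp [antiHoleDualZ, Fin.val_succ]

private lemma ahZss (n : ℕ) (q k : Fin n) :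
    antiHoleDualZ n q.succ k.succ =
      ahc n + (1 - ahc n) *
        Real.cos ((((q.val : ℝ) + 1) - ((k.val : ℝ) + 1)) * ahA n) := by
  simp only [antiHoleDualZ, ahc, ahA, Fin.val_succ]
  norm_num

private lemma ahA_cos (n : ℕ) (hn : 0 < n) :
    Real.cos (ahA n) = -Real.cos (Real.pi / n) := by
  have hne : (n : ℝ) ≠ 0 := Nat.cast_ne_zero.mpr hn.ne'
  have h : ahA n = Real.pi - Real.pi / n := by unfold ahA; field_simp
  rw [h, Real.cos_pi_sub]

private lemma ahA_sin (n : ℕ) (hn : 0 < n) :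
    Real.sin (ahA n) = Real.sin (Real.pi / n) := by
  have hne : (n : ℝ) ≠ 0 := Nat.cast_ne_zero.mpr hn.ne'
  have h : ahA n = Real.pi - Real.pi / n := by unfold ahA; field_simp
  rw [h, Real.sin_pi_sub]

private lemma ahA_per_cos (n : ℕ) (hodd : Odd n) (x : ℝ) :
    Real.cos ((x + n) * ahA n) = Real.cos (x * ahA n) := by
  obtain ⟨m, hm⟩ := hodd
  have h2 : (2 * (m : ℝ) + 1) ≠ 0 := by positivity
  have h : (x + n) * ahA n = x * ahA n + m * (2 * Real.pi) := by
    unfold ahA; subst hm; push_cast; field_simp; ring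
  rw [h, Real.cos_add_nat_mul_two_pi]

private lemma ahA_per_sin (n : ℕ) (hodd : Odd n) (x : ℝ) :
    Real.sin ((x + n) * ahA n) = Real.sin (x * ahA n) := by
  obtain ⟨m, hm⟩ := hodd
  have h2 : (2 * (m : ℝ) + 1) ≠ 0 := by positivity
  have h : (x + n) * ahA n = x * ahA n + m * (2 * Real.pi) := by
    unfold ahA; subst hm; push_cast; field_simp; ring
  rw [h, Real.sin_add_nat_mul_two_pi]

private lemma ahA_ncos (n : ℕ) (hodd : Odd n) : Real.cos ((n : ℝ) * ahA n) = 1 := by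
  have := ahA_per_cos n hodd 0
  simpa using this

private lemma ahA_nsin (n : ℕ) (hodd : Odd n) : Real.sin ((n : ℝ) * ahA n) = 0 := by
  have := ahA_per_sin n hodd 0
  simpa using this

/-- For odd `n ≥ 5`, the dual optimal solution `Z` is nondegenerate in the sense needed for
self-testing of the anti-hole inequalities: the only real symmetric `(1+n) × (1+n)` matrix `M`
with `M 0 0 = 0`, `M 0 i = M i i` for `i ∈ {1, …, n}`, `M i j = 0` for distinct
`i, j ∈ {1, …, n}` with `i - j ≢ ±1 (mod n)` (i.e. `i ∼ j` in `C̄_n`), and `M · Z = 0`, is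
`M = 0`. -/
theorem antiHoleDualZ_nondegenerate (n : ℕ) (hodd : Odd n) (hn : 5 ≤ n)
    (M : Matrix (Fin (n + 1)) (Fin (n + 1)) ℝ)
    (hsymm : M.IsSymm)
    (h00 : M 0 0 = 0)
    (hdiag : ∀ i : Fin (n + 1), i.val ≠ 0 → M 0 i = M i i)
    (hadj : ∀ i j : Fin (n + 1), i.val ≠ 0 → j.val ≠ 0 → i ≠ j →
      ¬(i.val % n + 1 = j.val ∨ j.val % n + 1 = i.val) → M i j = 0)
    (hMZ : M * antiHoleDualZ n = 0) :
    M = 0 := by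
  haveI : NeZero n := ⟨by omega⟩
  have hn0 : 0 < n := by omega
  have hnne : (n : ℝ) ≠ 0 := Nat.cast_ne_zero.mpr (by omega)
  have hnR : (0 : ℝ) < n := by exact_mod_cast hn0
  have hπ := Real.pi_pos
  have hθpos : 0 < Real.pi / n := by positivity
  have hθlt : Real.pi / n < Real.pi / 2 := by
    rw [div_lt_div_iff₀ hnR two_pos]
    have h5 : (5 : ℝ) ≤ n := by exact_mod_cast hn
    nlinarith
  have hcosθ : 0 < Real.cos (Real.pi / n) :=
    Real.cos_pos_of_mem_Ioo ⟨by linarith, hθlt⟩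
  have hsinθ : 0 < Real.sin (Real.pi / n) :=
    Real.sin_pos_of_pos_of_lt_pi hθpos
      (div_lt_self hπ (by exact_mod_cast (by omega : 1 < n)))
  have h1c : (0 : ℝ) < 1 + Real.cos (Real.pi / n) := by linarith
  have hcQ : ahc n * ((1 + Real.cos (Real.pi / n)) / Real.cos (Real.pi / n)) = 1 := by
    unfold ahc; field_simp
  have h1mc : (1 : ℝ) - ahc n ≠ 0 := by
    unfold ahc
    have : Real.cos (Real.pi / n) / (1 + Real.cos (Real.pi / n)) < 1 := by
      rw [div_lt_one h1c]; linarith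
    linarith
  -- entries of M * Z
  have hent : ∀ i k : Fin (n + 1), ∑ j, M i j * antiHoleDualZ n j k = 0 := by
    intro i k
    have h := congrFun (congrFun hMZ i) k
    rwa [Matrix.mul_apply, Matrix.zero_apply] at h
  -- column 0 equation
  have hcol0 : ∀ i : Fin (n + 1),
      ∑ q : Fin n, M i q.succ =
        M i 0 * ((1 + Real.cos (Real.pi / n)) / Real.cos (Real.pi / n)) := by
    intro i
    have h := hent i 0
    rw [Fin.sum_univ_succ, ahZ00 n] at h
    simp only [ahZs0, mul_neg, mul_one, Finset.sum_neg_distrib] at h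
    linarith
  -- the cos/sin combination from column k.succ
  have hCS : ∀ (i : Fin (n + 1)) (k : Fin n),
      Real.cos (((k.val : ℝ) + 1) * ahA n) *
          (∑ q : Fin n, M i q.succ * Real.cos (((q.val : ℝ) + 1) * ahA n)) +
        Real.sin (((k.val : ℝ) + 1) * ahA n) *
          (∑ q : Fin n, M i q.succ * Real.sin (((q.val : ℝ) + 1) * ahA n)) = 0 := by
    intro i k
    have h := hent i k.succ
    rw [Fin.sum_univ_succ, ahZ0s] at h
    have hexp : ∀ q : Fin n, M i q.succ * antiHoleDualZ n q.succ k.succ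
        = ahc n * M i q.succ
          + (Real.cos (((k.val : ℝ) + 1) * ahA n) * (1 - ahc n)) *
              (M i q.succ * Real.cos (((q.val : ℝ) + 1) * ahA n))
          + (Real.sin (((k.val : ℝ) + 1) * ahA n) * (1 - ahc n)) *
              (M i q.succ * Real.sin (((q.val : ℝ) + 1) * ahA n)) := by
      intro q
      rw [ahZss n q k,
        show (((q.val : ℝ) + 1) - ((k.val : ℝ) + 1)) * ahA n
            = ((q.val : ℝ) + 1) * ahA n - ((k.val : ℝ) + 1) * ahA n by ring,
        Real.cos_sub]
      ring
    rw [Finset.sum_congr rfl (fun q _ => hexp q)] at h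
    rw [Finset.sum_add_distrib, Finset.sum_add_distrib, ← Finset.mul_sum, ← Finset.mul_sum,
      ← Finset.mul_sum] at h
    rw [hcol0 i] at h
    have h3 : (1 - ahc n) *
        (Real.cos (((k.val : ℝ) + 1) * ahA n) *
            (∑ q : Fin n, M i q.succ * Real.cos (((q.val : ℝ) + 1) * ahA n)) +
          Real.sin (((k.val : ℝ) + 1) * ahA n) *
            (∑ q : Fin n, M i q.succ * Real.sin (((q.val : ℝ) + 1) * ahA n))) = 0 := by
      linear_combination h - M i 0 * hcQ
    exact (mul_eq_zero.mp h3).resolve_left h1mc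
  -- the two scalar equations per row
  have hV : ∀ i : Fin (n + 1),
      (∑ q : Fin n, M i q.succ * Real.cos (((q.val : ℝ) + 1) * ahA n)) = 0 := by
    intro i
    have h := hCS i ⟨n - 1, by omega⟩
    have hval : (((⟨n - 1, by omega⟩ : Fin n).val : ℝ) + 1) = (n : ℝ) := by
      push_cast [Nat.cast_sub (by omega : 1 ≤ n)]
      ring
    rw [hval, ahA_ncos n hodd, ahA_nsin n hodd] at h
    simpa using h
  have hW : ∀ i : Fin (n + 1),
      (∑ q : Fin n, M i q.succ * Real.sin (((q.val : ℝ) + 1) * ahA n)) = 0 := by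
    intro i
    have h := hCS i ⟨0, by omega⟩
    have hval : (((⟨0, by omega⟩ : Fin n).val : ℝ) + 1) = (1 : ℝ) := by norm_num
    rw [hval, one_mul, hV i, mul_zero, zero_add] at h
    have hs : Real.sin (ahA n) ≠ 0 := by rw [ahA_sin n hn0]; exact hsinθ.ne'
    exact (mul_eq_zero.mp h).resolve_left hs
  -- Fin n arithmetic
  have hv1 : (1 : Fin n).val = 1 := by
    rw [Fin.val_one']; exact Nat.mod_eq_of_lt (by omega)
  have hvadd : ∀ p : Fin n, (p + 1).val = (p.val + 1) % n := by
    intro p; rw [Fin.val_add, hv1]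
  have hvsub : ∀ p : Fin n, (p - 1).val = (n - 1 + p.val) % n := by
    intro p
    rw [Fin.sub_def]
    have h1n : 1 % n = 1 := Nat.mod_eq_of_lt (by omega)
    simp [hv1, h1n]
  have hsubval : ∀ p : Fin n,
      (p.val ≠ 0 → (p - 1).val = p.val - 1) ∧ (p.val = 0 → (p - 1).val = n - 1) := by
    intro p
    constructor
    · intro h
      rw [hvsub, show n - 1 + p.val = n + (p.val - 1) by omega, Nat.add_mod_left]
      exact Nat.mod_eq_of_lt (by have := p.isLt; omega)
    · intro h
      rw [hvsub, h, Nat.add_zero]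
      exact Nat.mod_eq_of_lt (by omega)
  have haddval : ∀ p : Fin n,
      (p.val + 1 < n → (p + 1).val = p.val + 1) ∧ (p.val + 1 = n → (p + 1).val = 0) := by
    intro p
    constructor
    · intro h; rw [hvadd]; exact Nat.mod_eq_of_lt h
    · intro h; rw [hvadd, h]; exact Nat.mod_self n
  have hd1 : ∀ p : Fin n, p - 1 ≠ p := by
    intro p h
    have hv := congrArg Fin.val h
    rcases Nat.eq_zero_or_pos p.val with h0 | h0
    · rw [(hsubval p).2 h0, h0] at hv; omega
    · rw [(hsubval p).1 (by omega)] at hv; omega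
  have hd2 : ∀ p : Fin n, p + 1 ≠ p := by
    intro p h
    have hv := congrArg Fin.val h
    rcases lt_or_eq_of_le (Nat.succ_le_of_lt p.isLt) with h0 | h0
    · rw [(haddval p).1 h0] at hv; omega
    · rw [(haddval p).2 h0] at hv
      have := p.isLt; omega
  have hd3 : ∀ p : Fin n, p - 1 ≠ p + 1 := by
    intro p h
    have hv := congrArg Fin.val h
    rcases Nat.eq_zero_or_pos p.val with h0 | h0
    · rw [(hsubval p).2 h0] at hv
      rcases lt_or_eq_of_le (Nat.succ_le_of_lt p.isLt) with h1 | h1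
      · rw [(haddval p).1 h1] at hv; omega
      · rw [(haddval p).2 h1] at hv; omega
    · rw [(hsubval p).1 (by omega)] at hv
      rcases lt_or_eq_of_le (Nat.succ_le_of_lt p.isLt) with h1 | h1
      · rw [(haddval p).1 h1] at hv; omega
      · rw [(haddval p).2 h1] at hv; omega
  -- adjacency in nice form
  have hadj' : ∀ p q : Fin n, q ≠ p - 1 → q ≠ p → q ≠ p + 1 → M p.succ q.succ = 0 := by
    intro p q h1 h2 h3
    refine hadj p.succ q.succ (by simp [Fin.val_succ]) (by simp [Fin.val_succ]) ?_ ?_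
    · exact fun h => h2 ((Fin.succ_inj.mp h).symm)
    · rintro (h | h)
      · apply h3
        apply Fin.ext
        rw [hvadd]
        rw [Fin.val_succ, Fin.val_succ] at h
        omega
      · apply h1
        have hq : q + 1 = p := by
          apply Fin.ext
          rw [hvadd]
          rw [Fin.val_succ, Fin.val_succ] at h
          omega
        rw [← hq, add_sub_cancel_right]
  -- reduce row sums to three terms
  have hred : ∀ (G : Fin n → ℝ) (p : Fin n),
      ∑ q : Fin n, M p.succ q.succ * G q =
        M p.succ (p - 1).succ * G (p - 1) + M p.succ p.succ * G p +
          M p.succ (p + 1).succ * G (p + 1) := by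
    intro G p
    have hz : ∀ x ∈ Finset.univ, x ∉ ({p - 1, p, p + 1} : Finset (Fin n)) →
        M p.succ x.succ * G x = 0 := by
      intro x _ hx
      simp only [Finset.mem_insert, Finset.mem_singleton] at hx
      push_neg at hx
      rw [hadj' p x hx.1 hx.2.1 hx.2.2, zero_mul]
    rw [← Finset.sum_subset (Finset.subset_univ _) hz]
    rw [Finset.sum_insert, Finset.sum_insert, Finset.sum_singleton]
    · ring
    · simp only [Finset.mem_singleton]
      exact fun h => hd2 p h.symm
    · simp only [Finset.mem_insert, Finset.mem_singleton]
      rintro (h | h)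
      exacts [hd1 p h, hd3 p h]
  -- periodicity of the values
  have hper : ∀ (F : ℝ → ℝ), (∀ x : ℝ, F (x + n) = F x) → ∀ p : Fin n,
      F (((p - 1 : Fin n).val : ℝ) + 1) = F ((p.val : ℝ)) ∧
      F (((p + 1 : Fin n).val : ℝ) + 1) = F ((p.val : ℝ) + 2) := by
    intro F hF p
    constructor
    · rcases Nat.eq_zero_or_pos p.val with h0 | h0
      · rw [(hsubval p).2 h0, h0]
        have h2 : ((n - 1 : ℕ) : ℝ) + 1 = (0 : ℝ) + n := by
          push_cast [Nat.cast_sub (by omega : 1 ≤ n)]; ring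
        rw [h2, hF]
        norm_num
      · rw [(hsubval p).1 (by omega)]
        congr 1
        push_cast [Nat.cast_sub (by omega : 1 ≤ p.val)]
        ring
    · rcases lt_or_eq_of_le (Nat.succ_le_of_lt p.isLt) with h0 | h0
      · rw [(haddval p).1 h0]
        congr 1
        push_cast
        ring
      · rw [(haddval p).2 h0]
        have h2 : (p.val : ℝ) + 2 = 1 + n := by
          have hv : p.val = n - 1 := by omega
          rw [hv]
          push_cast [Nat.cast_sub (by omega : 1 ≤ n)]
          ring
        rw [h2, hF]
        norm_num
  have hperC : ∀ p : Fin n,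
      Real.cos ((((p - 1 : Fin n).val : ℝ) + 1) * ahA n) = Real.cos ((p.val : ℝ) * ahA n) ∧
      Real.cos ((((p + 1 : Fin n).val : ℝ) + 1) * ahA n) =
        Real.cos (((p.val : ℝ) + 2) * ahA n) :=
    hper (fun x => Real.cos (x * ahA n)) (fun x => ahA_per_cos n hodd x)
  have hperS : ∀ p : Fin n,
      Real.sin ((((p - 1 : Fin n).val : ℝ) + 1) * ahA n) = Real.sin ((p.val : ℝ) * ahA n) ∧
      Real.sin ((((p + 1 : Fin n).val : ℝ) + 1) * ahA n) =
        Real.sin (((p.val : ℝ) + 2) * ahA n) :=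
    hper (fun x => Real.sin (x * ahA n)) (fun x => ahA_per_sin n hodd x)
  -- the three-term row equations
  have hrowC : ∀ p : Fin n,
      M p.succ (p - 1).succ * Real.cos ((p.val : ℝ) * ahA n)
        + M p.succ p.succ * Real.cos (((p.val : ℝ) + 1) * ahA n)
        + M p.succ (p + 1).succ * Real.cos (((p.val : ℝ) + 2) * ahA n) = 0 := by
    intro p
    have h := hV p.succ
    rw [hred (fun q => Real.cos (((q.val : ℝ) + 1) * ahA n)) p] at h
    rw [(hperC p).1, (hperC p).2] at h
    exact h
  have hrowS : ∀ p : Fin n,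
      M p.succ (p - 1).succ * Real.sin ((p.val : ℝ) * ahA n)
        + M p.succ p.succ * Real.sin (((p.val : ℝ) + 1) * ahA n)
        + M p.succ (p + 1).succ * Real.sin (((p.val : ℝ) + 2) * ahA n) = 0 := by
    intro p
    have h := hW p.succ
    rw [hred (fun q => Real.sin (((q.val : ℝ) + 1) * ahA n)) p] at h
    rw [(hperS p).1, (hperS p).2] at h
    exact h
  -- eliminate: the two neighbours of each row are equal
  have hAC : ∀ p : Fin n, M p.succ (p - 1).succ = M p.succ (p + 1).succ := by
    intro p
    have E2 := hrowC p
    have E3 := hrowS p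
    have t1 : Real.sin (ahA n)
        = Real.sin (((p.val : ℝ) + 1) * ahA n) * Real.cos ((p.val : ℝ) * ahA n)
          - Real.cos (((p.val : ℝ) + 1) * ahA n) * Real.sin ((p.val : ℝ) * ahA n) := by
      rw [← Real.sin_sub]
      congr 1
      ring
    have t2 : -Real.sin (ahA n)
        = Real.sin (((p.val : ℝ) + 1) * ahA n) * Real.cos (((p.val : ℝ) + 2) * ahA n)
          - Real.cos (((p.val : ℝ) + 1) * ahA n) * Real.sin (((p.val : ℝ) + 2) * ahA n) := by
      rw [← Real.sin_neg, ← Real.sin_sub]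
      congr 1
      ring
    have key : (M p.succ (p - 1).succ - M p.succ (p + 1).succ) * Real.sin (ahA n) = 0 := by
      linear_combination Real.sin (((p.val : ℝ) + 1) * ahA n) * E2
        - Real.cos (((p.val : ℝ) + 1) * ahA n) * E3
        + M p.succ (p - 1).succ * t1 + M p.succ (p + 1).succ * t2
    have hs : Real.sin (ahA n) ≠ 0 := by rw [ahA_sin n hn0]; exact hsinθ.ne'
    have := (mul_eq_zero.mp key).resolve_right hs
    linarith
  -- and the diagonal is determined
  have hB : ∀ p : Fin n,
      M p.succ p.succ
        = -(M p.succ (p - 1).succ + M p.succ (p + 1).succ) * Real.cos (ahA n) := by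
    intro p
    have E2 := hrowC p
    have E3 := hrowS p
    have u1 : Real.cos (((p.val : ℝ) + 1) * ahA n) * Real.cos ((p.val : ℝ) * ahA n)
        + Real.sin (((p.val : ℝ) + 1) * ahA n) * Real.sin ((p.val : ℝ) * ahA n)
        = Real.cos (ahA n) := by
      rw [← Real.cos_sub]
      congr 1
      ring
    have u2 : Real.cos (((p.val : ℝ) + 1) * ahA n) * Real.cos (((p.val : ℝ) + 2) * ahA n)
        + Real.sin (((p.val : ℝ) + 1) * ahA n) * Real.sin (((p.val : ℝ) + 2) * ahA n)
        = Real.cos (ahA n) := by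
      rw [← Real.cos_sub,
        show ((p.val : ℝ) + 1) * ahA n - ((p.val : ℝ) + 2) * ahA n = -(ahA n) by ring,
        Real.cos_neg]
    have u3 : Real.cos (((p.val : ℝ) + 1) * ahA n) ^ 2
        + Real.sin (((p.val : ℝ) + 1) * ahA n) ^ 2 = 1 := Real.cos_sq_add_sin_sq _
    linear_combination Real.cos (((p.val : ℝ) + 1) * ahA n) * E2
      + Real.sin (((p.val : ℝ) + 1) * ahA n) * E3
      - M p.succ (p - 1).succ * u1 - M p.succ (p + 1).succ * u2 - M p.succ p.succ * u3
  -- the edge values are all equal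
  have hsp : ∀ p : Fin n, p - 1 + 1 = p := fun p => sub_add_cancel p 1
  have hE : ∀ p : Fin n, M (p - 1).succ p.succ = M p.succ (p + 1).succ := by
    intro p
    have h1 : M (p - 1).succ p.succ = M p.succ (p - 1).succ := hsymm.apply p.succ (p - 1).succ
    rw [h1]
    exact hAC p
  have estep : ∀ q : Fin n, M q.succ (q + 1).succ = M (q + 1).succ (q + 1 + 1).succ := by
    intro q
    have h := hE (q + 1)
    rw [add_sub_cancel_right] at h
    exact h
  have econst : ∀ p : Fin n,
      M p.succ (p + 1).succ = M (0 : Fin n).succ ((0 : Fin n) + 1).succ := by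
    have key : ∀ k (hk : k < n), M (⟨k, hk⟩ : Fin n).succ ((⟨k, hk⟩ : Fin n) + 1).succ
        = M (0 : Fin n).succ ((0 : Fin n) + 1).succ := by
      intro k
      induction k with
      | zero =>
        intro hk
        have h0 : (⟨0, hk⟩ : Fin n) = 0 := Fin.ext (by simp)
        rw [h0]
      | succ k ih =>
        intro hk
        have hk' : k < n := by omega
        have heq : (⟨k + 1, hk⟩ : Fin n) = (⟨k, hk'⟩ : Fin n) + 1 := by
          apply Fin.ext
          rw [hvadd]
          exact (Nat.mod_eq_of_lt hk).symm
        rw [heq, ← estep ⟨k, hk'⟩]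
        exact ih hk'
    intro p
    have h := key p.val p.isLt
    rwa [Fin.eta] at h
  have hCe : ∀ p : Fin n, M p.succ (p + 1).succ = M (0 : Fin n).succ ((0 : Fin n) + 1).succ :=
    econst
  have hAe : ∀ p : Fin n, M p.succ (p - 1).succ = M (0 : Fin n).succ ((0 : Fin n) + 1).succ :=
    fun p => (hAC p).trans (econst p)
  -- row 0 kills everything
  have h0sum : ∑ q : Fin n, M (0 : Fin (n + 1)) q.succ = 0 := by
    have h := hcol0 0
    rw [h00, zero_mul] at h
    exact h
  have hall : ∀ q : Fin n, M (0 : Fin (n + 1)) q.succ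
      = 2 * M (0 : Fin n).succ ((0 : Fin n) + 1).succ * Real.cos (Real.pi / n) := by
    intro q
    rw [hdiag q.succ (by simp [Fin.val_succ]), hB q, hAe q, hCe q, ahA_cos n hn0]
    ring
  have he0 : M (0 : Fin n).succ ((0 : Fin n) + 1).succ = 0 := by
    rw [Finset.sum_congr rfl (fun q _ => hall q), Finset.sum_const, Finset.card_univ,
      Fintype.card_fin, nsmul_eq_mul] at h0sum
    have h2 : (2 : ℝ) * M (0 : Fin n).succ ((0 : Fin n) + 1).succ * Real.cos (Real.pi / n)
        = 0 := by
      rcases mul_eq_zero.mp h0sum with h | h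
      · exact absurd h hnne
      · exact h
    rcases mul_eq_zero.mp h2 with h | h
    · rcases mul_eq_zero.mp h with h' | h'
      · norm_num at h'
      · exact h'
    · exact absurd h hcosθ.ne'
  have hCz : ∀ p : Fin n, M p.succ (p + 1).succ = 0 := fun p => (hCe p).trans he0
  have hAz : ∀ p : Fin n, M p.succ (p - 1).succ = 0 := fun p => (hAe p).trans he0
  have hBz : ∀ p : Fin n, M p.succ p.succ = 0 := by
    intro p
    rw [hB p, hAz p, hCz p]
    ring
  have h0z : ∀ q : Fin n, M 0 q.succ = 0 := by
    intro q
    rw [hdiag q.succ (by simp [Fin.val_succ])]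
    exact hBz q
  -- finish
  ext i j
  rw [Matrix.zero_apply]
  induction i using Fin.cases with
  | zero =>
    induction j using Fin.cases with
    | zero => exact h00
    | succ q => exact h0z q
  | succ p =>
    induction j using Fin.cases with
    | zero =>
      rw [hsymm.apply 0 p.succ]
      exact h0z p
    | succ q =>
      by_cases h1 : q = p - 1
      · rw [h1]; exact hAz p
      · by_cases h2 : q = p
        · rw [h2]; exact hBz p
        · by_cases h3 : q = p + 1
          · rw [h3]; exact hCz p
          · exact hadj' p q h1 h2 h3
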